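/- Let (E, μ) be a measure space and K : E × E → ℂ a measurable kernel such that (i) for all x, z ∈ E the function y ↦ K(x,y)·K(y,z) is integrable and ∫_E K(x,y)·K(y,z) dμ(y) = K(x,z), and (ii) the function x ↦ K(x,x) is integrable with ∫_E K(x,x) dμ(x) = c. Fix n ≥ 1 and points x₁, …, x_{n−1} ∈ E. Then the function y ↦ det(K(z_i, z_j))_{1≤i,j≤n}, where z_i = x_i for i ≤ n−1 and z_n = y, is integrable, and ∫_E det(K(z_i, z_j))_{1≤i,j≤n} dμ(y) = (c − n + 1) · det(K(x_i, x_j))_{1≤i,j≤n−1}. -/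

import Mathlib

open MeasureTheory

open Finset Equiv Equiv.Perm in
/-- **Reproducing-kernel integration lemma (Mehta's Lemma 4).**
If `∫ K(x,y)K(y,z) dμ(y) = K(x,z)` and `∫ K(x,x) dμ(x) = c`, then integrating out the
last variable of the `(n+1) × (n+1)` determinant `det (K(z_i, z_j))` (with the first `n`
points fixed) yields `(c - (n+1) + 1) = (c - n)` times the `n × n` determinant. -/
theorem integrate_out_last_variable_of_det
    {E : Type*} [MeasurableSpace E] (μ : Measure E)
    (K : E → E → ℂ) (hKmeas : Measurable (Function.uncurry K)) (c : ℂ)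
    (hrepro_int : ∀ x z : E, Integrable (fun y => K x y * K y z) μ)
    (hrepro : ∀ x z : E, ∫ y, K x y * K y z ∂μ = K x z)
    (htr_int : Integrable (fun x => K x x) μ)
    (htr : ∫ x, K x x ∂μ = c)
    (n : ℕ) (x : Fin n → E) :
    Integrable (fun y => Matrix.det (Matrix.of (fun i j : Fin (n + 1) =>
        K ((Fin.snoc x y : Fin (n + 1) → E) i) ((Fin.snoc x y : Fin (n + 1) → E) j)))) μ ∧
    ∫ y, Matrix.det (Matrix.of (fun i j : Fin (n + 1) =>
        K ((Fin.snoc x y : Fin (n + 1) → E) i) ((Fin.snoc x y : Fin (n + 1) → E) j))) ∂μ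
      = (c - n) * Matrix.det (Matrix.of (fun i j : Fin n => K (x i) (x j))) := by
  classical
  -- Step 1: replace `snoc` by `cons` (rotate rows and columns simultaneously).
  have hsc : ∀ y : E,
      (Matrix.of (fun i j : Fin (n + 1) =>
        K ((Fin.snoc x y : Fin (n + 1) → E) i) ((Fin.snoc x y : Fin (n + 1) → E) j))).det
      = (Matrix.of (fun i j : Fin (n + 1) =>
        K ((Fin.cons y x : Fin (n + 1) → E) i) ((Fin.cons y x : Fin (n + 1) → E) j))).det := by
    intro y
    have hz : ∀ i : Fin (n + 1),
        (Fin.cons y x : Fin (n + 1) → E) (finRotate (n + 1) i)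
          = (Fin.snoc x y : Fin (n + 1) → E) i := by
      intro i
      induction i using Fin.lastCases with
      | last => simp [finRotate_succ_apply, Fin.last_add_one]
      | cast j => simp [finRotate_succ_apply, Fin.coeSucc_eq_succ]
    have : (Matrix.of (fun i j : Fin (n + 1) =>
        K ((Fin.snoc x y : Fin (n + 1) → E) i) ((Fin.snoc x y : Fin (n + 1) → E) j)))
      = (Matrix.of (fun i j : Fin (n + 1) =>
        K ((Fin.cons y x : Fin (n + 1) → E) i)
          ((Fin.cons y x : Fin (n + 1) → E) j))).submatrix
        (finRotate (n + 1)) (finRotate (n + 1)) := by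
      ext i j
      simp only [Matrix.submatrix_apply, Matrix.of_apply]
      rw [← hz i, ← hz j]
    rw [this, Matrix.det_submatrix_equiv_self]
  -- abbreviation for the product term
  set z : E → Fin (n + 1) → E := fun y => (Fin.cons y x : Fin (n + 1) → E) with hzdef
  -- Step 2: product formulas.
  have prod0 : ∀ (e : Perm (Fin n)) (y : E),
      (∏ i : Fin (n + 1),
        K (z y (Equiv.Perm.decomposeFin.symm ((0 : Fin (n + 1)), e) i)) (z y i))
      = K y y * ∏ j : Fin n, K (x (e j)) (x j) := by
    intro e y
    rw [Fin.prod_univ_succ]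
    have h0 : K (z y (Equiv.Perm.decomposeFin.symm ((0 : Fin (n + 1)), e) 0)) (z y 0)
        = K y y := by simp [hzdef]
    rw [h0]
    refine congrArg _ (Finset.prod_congr rfl fun j _ => ?_)
    rw [Equiv.Perm.decomposeFin_symm_apply_succ]
    simp [hzdef, Equiv.swap_self]
  have prodsucc : ∀ (q : Fin n) (e : Perm (Fin n)) (y : E),
      (∏ i : Fin (n + 1),
        K (z y (Equiv.Perm.decomposeFin.symm (q.succ, e) i)) (z y i))
      = (K (x q) y * K y (x (e⁻¹ q)))
          * ∏ j ∈ Finset.univ.erase (e⁻¹ q), K (x (e j)) (x j) := by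
    intro q e y
    rw [Fin.prod_univ_succ]
    have hsplit : (∏ j : Fin n,
        K (z y (Equiv.Perm.decomposeFin.symm (q.succ, e) j.succ)) (z y j.succ))
        = K y (x (e⁻¹ q)) * ∏ j ∈ Finset.univ.erase (e⁻¹ q), K (x (e j)) (x j) := by
      rw [← Finset.mul_prod_erase Finset.univ _ (Finset.mem_univ (e⁻¹ q))]
      congr 1
      · rw [Equiv.Perm.decomposeFin_symm_apply_succ]
        rw [(Equiv.Perm.eq_inv_iff_eq (f := e) (y := q)).mp rfl, Equiv.swap_apply_right]
        simp [hzdef]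
      · refine Finset.prod_congr rfl fun j hj => ?_
        rw [Equiv.Perm.decomposeFin_symm_apply_succ]
        have h2 : (e j).succ ≠ q.succ := by
          intro h
          exact (Finset.mem_erase.mp hj).1
            (by rw [← Fin.succ_inj.mp h, Equiv.Perm.eq_inv_iff_eq])
        rw [Equiv.swap_apply_of_ne_of_ne (Fin.succ_ne_zero _) h2]
        simp [hzdef]
    rw [hsplit, Equiv.Perm.decomposeFin_symm_apply_zero]
    simp [hzdef, mul_assoc]
  -- Step 3: determinant as sum over decomposed permutations.
  have hdet : ∀ y : E,
      (Matrix.of (fun i j : Fin (n + 1) => K (z y i) (z y j))).det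
      = ∑ pe : Fin (n + 1) × Perm (Fin n),
          ((Equiv.Perm.sign (Equiv.Perm.decomposeFin.symm pe) : ℤ) : ℂ)
            * ∏ i : Fin (n + 1), K (z y (Equiv.Perm.decomposeFin.symm pe i)) (z y i) := by
    intro y
    rw [Matrix.det_apply']
    refine Fintype.sum_equiv Equiv.Perm.decomposeFin _ _ fun σ => ?_
    simp
  -- Step 4: integrability of each summand.
  have hInt : ∀ (p : Fin (n + 1)) (e : Perm (Fin n)),
      Integrable (fun y =>
        ((Equiv.Perm.sign (Equiv.Perm.decomposeFin.symm (p, e)) : ℤ) : ℂ)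
          * ∏ i : Fin (n + 1), K (z y (Equiv.Perm.decomposeFin.symm (p, e) i)) (z y i)) μ := by
    intro p e
    induction p using Fin.cases with
    | zero =>
      simp_rw [prod0 e]
      exact (htr_int.mul_const _).const_mul _
    | succ q =>
      simp_rw [prodsucc q e]
      exact ((hrepro_int _ _).mul_const _).const_mul _
  have hIntSum : Integrable (fun y =>
      (Matrix.of (fun i j : Fin (n + 1) => K (z y i) (z y j))).det) μ := by
    have : (fun y => (Matrix.of (fun i j : Fin (n + 1) => K (z y i) (z y j))).det)
        = fun y => ∑ pe : Fin (n + 1) × Perm (Fin n),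
            ((Equiv.Perm.sign (Equiv.Perm.decomposeFin.symm pe) : ℤ) : ℂ)
              * ∏ i : Fin (n + 1), K (z y (Equiv.Perm.decomposeFin.symm pe i)) (z y i) :=
      funext hdet
    rw [this]
    exact integrable_finset_sum _ fun pe _ => hInt pe.1 pe.2
  constructor
  · have : (fun y => Matrix.det (Matrix.of (fun i j : Fin (n + 1) =>
        K ((Fin.snoc x y : Fin (n + 1) → E) i) ((Fin.snoc x y : Fin (n + 1) → E) j))))
        = fun y => (Matrix.of (fun i j : Fin (n + 1) => K (z y i) (z y j))).det :=
      funext hsc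
    rw [this]
    exact hIntSum
  -- Step 5: compute the integral.
  have step1 : ∫ y, Matrix.det (Matrix.of (fun i j : Fin (n + 1) =>
        K ((Fin.snoc x y : Fin (n + 1) → E) i) ((Fin.snoc x y : Fin (n + 1) → E) j))) ∂μ
      = ∑ pe : Fin (n + 1) × Perm (Fin n),
          ∫ y, ((Equiv.Perm.sign (Equiv.Perm.decomposeFin.symm pe) : ℤ) : ℂ)
            * ∏ i : Fin (n + 1), K (z y (Equiv.Perm.decomposeFin.symm pe i)) (z y i) ∂μ := by
    simp_rw [show ∀ y : E, Matrix.det (Matrix.of (fun i j : Fin (n + 1) =>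
        K ((Fin.snoc x y : Fin (n + 1) → E) i) ((Fin.snoc x y : Fin (n + 1) → E) j)))
        = (Matrix.of (fun i j : Fin (n + 1) => K (z y i) (z y j))).det from hsc, hdet]
    exact integral_finset_sum _ fun pe _ => hInt pe.1 pe.2
  rw [step1, Fintype.sum_prod_type, Fin.sum_univ_succ]
  -- the two pieces
  have piece0 : ∑ e : Perm (Fin n),
      ∫ y, ((Equiv.Perm.sign (Equiv.Perm.decomposeFin.symm ((0 : Fin (n + 1)), e)) : ℤ) : ℂ)
        * ∏ i : Fin (n + 1), K (z y (Equiv.Perm.decomposeFin.symm ((0 : Fin (n + 1)), e) i)) (z y i) ∂μ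
      = c * Matrix.det (Matrix.of (fun i j : Fin n => K (x i) (x j))) := by
    have : ∀ e : Perm (Fin n),
        ∫ y, ((Equiv.Perm.sign (Equiv.Perm.decomposeFin.symm ((0 : Fin (n + 1)), e)) : ℤ) : ℂ)
          * ∏ i : Fin (n + 1), K (z y (Equiv.Perm.decomposeFin.symm ((0 : Fin (n + 1)), e) i)) (z y i) ∂μ
        = ((Equiv.Perm.sign e : ℤ) : ℂ) * (c * ∏ j : Fin n, K (x (e j)) (x j)) := by
      intro e
      simp_rw [prod0 e]
      rw [integral_const_mul, integral_mul_const, htr,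
        Equiv.Perm.decomposeFin.symm_sign]
      simp
    simp_rw [this]
    rw [Matrix.det_apply']
    rw [Finset.mul_sum]
    refine Finset.sum_congr rfl fun e _ => ?_
    simp only [Matrix.of_apply]
    ring
  have piecesucc : ∀ q : Fin n, ∑ e : Perm (Fin n),
      ∫ y, ((Equiv.Perm.sign (Equiv.Perm.decomposeFin.symm (q.succ, e)) : ℤ) : ℂ)
        * ∏ i : Fin (n + 1), K (z y (Equiv.Perm.decomposeFin.symm (q.succ, e) i)) (z y i) ∂μ
      = -Matrix.det (Matrix.of (fun i j : Fin n => K (x i) (x j))) := by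
    intro q
    have : ∀ e : Perm (Fin n),
        ∫ y, ((Equiv.Perm.sign (Equiv.Perm.decomposeFin.symm (q.succ, e)) : ℤ) : ℂ)
          * ∏ i : Fin (n + 1), K (z y (Equiv.Perm.decomposeFin.symm (q.succ, e) i)) (z y i) ∂μ
        = -(((Equiv.Perm.sign e : ℤ) : ℂ) * ∏ j : Fin n, K (x (e j)) (x j)) := by
      intro e
      simp_rw [prodsucc q e]
      rw [integral_const_mul, integral_mul_const, hrepro,
        Equiv.Perm.decomposeFin.symm_sign]
      have hre : K (x q) (x (e⁻¹ q)) * ∏ j ∈ Finset.univ.erase (e⁻¹ q), K (x (e j)) (x j)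
          = ∏ j : Fin n, K (x (e j)) (x j) := by
        rw [← Finset.mul_prod_erase Finset.univ (fun j => K (x (e j)) (x j))
          (Finset.mem_univ (e⁻¹ q))]
        rw [(Equiv.Perm.eq_inv_iff_eq (f := e) (y := q)).mp rfl]
      rw [hre]
      simp [Fin.succ_ne_zero]
    simp_rw [this]
    rw [Matrix.det_apply', ← Finset.sum_neg_distrib]
    rfl
  rw [piece0]
  have : ∀ q ∈ Finset.univ, (fun q : Fin n => ∑ e : Perm (Fin n),
      ∫ y, ((Equiv.Perm.sign (Equiv.Perm.decomposeFin.symm (q.succ, e)) : ℤ) : ℂ)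
        * ∏ i : Fin (n + 1), K (z y (Equiv.Perm.decomposeFin.symm (q.succ, e) i)) (z y i) ∂μ) q
      = -Matrix.det (Matrix.of (fun i j : Fin n => K (x i) (x j))) := fun q _ => piecesucc q
  rw [Finset.sum_congr rfl this, Finset.sum_const, Finset.card_univ, Fintype.card_fin]
  simp only [nsmul_eq_mul]
  ring
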